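/- Let k ≥ 1 and let a, b ∈ {0,1}^k with a ≠ b. Let δ ∈ [0, 1), and suppose that for each integer N ≥ k there is a linear map Φ_N : ℝ^{2^N} → ℝ^{M_N} satisfying the restricted-isometry-type lower bound (1 − δ)‖v‖₂ ≤ ‖Φ_N(v)‖₂ for the vector v = F_N(a) − F_N(b) (viewing the transforms as vectors in ℝ^{2^N} indexed by {0,1}^N). Then for every D ≥ 0 there exists N ≥ k such that ‖Φ_N(F_N(a)) − Φ_N(F_N(b))‖₂ ≥ D. -/

import Mathlib

/-- `occCount a x` : number of starting positions at which the rule `a` (a binary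
string of length `k`) occurs as a contiguous substring of the binary string `x`
of length `N`.  This is the value `F_N(a)(x)` of the transform. -/
def occCount {k N : ℕ} (a : Fin k → Bool) (x : Fin N → Bool) : ℕ :=
  ((List.range (N - k + 1)).filter
    (fun i => (List.ofFn a).isPrefixOf ((List.ofFn x).drop i))).length

/-- The transform `F_N(a)` viewed as a vector of `ℝ^{2^N}`, i.e. an element of the
Euclidean space indexed by the binary strings of length `N`. -/
def transformVec (k N : ℕ) (a : Fin k → Bool) : EuclideanSpace ℝ (Fin N → Bool) :=
  WithLp.toLp 2 (fun x => (occCount a x : ℝ))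

lemma count_fixed (m : ℕ) (s : Finset (Fin m)) (f : Fin m → Bool) :
    (Finset.univ.filter (fun y : Fin m → Bool => ∀ i ∈ s, y i = f i)).card = 2 ^ (m - s.card) := by
  classical
  have e : {y : Fin m → Bool // ∀ i ∈ s, y i = f i} ≃ ({i : Fin m // i ∉ s} → Bool) :=
    { toFun := fun y i => y.1 i.1
      invFun := fun g => ⟨fun i => if h : i ∈ s then f i else g ⟨i, h⟩, fun i hi => by simp [hi]⟩
      left_inv := fun y => by
        ext i
        by_cases h : i ∈ s
        · simp [h, y.2 i h]
        · simp [h]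
      right_inv := fun g => by
        ext i
        simp [i.2] }
  have h1 : (Finset.univ.filter (fun y : Fin m → Bool => ∀ i ∈ s, y i = f i)).card
      = Fintype.card {y : Fin m → Bool // ∀ i ∈ s, y i = f i} := (Fintype.card_subtype _).symm
  rw [h1, Fintype.card_congr e, Fintype.card_fun]
  simp [Fintype.card_subtype_compl, Fintype.card_coe]

lemma count_slice (m d : ℕ) (c : List Bool) (h : d + c.length ≤ m) :
    (Finset.univ.filter (fun y : Fin m → Bool =>
      ((List.ofFn y).drop d).take c.length = c)).card = 2 ^ (m - c.length) := by
  classical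
  set L := c.length with hL
  set s : Finset (Fin m) := Finset.univ.filter (fun i : Fin m => d ≤ i.1 ∧ i.1 < d + L) with hs
  have hcard : s.card = L := by
    have : s.card = (Finset.Ico d (d + L)).card := by
      apply Finset.card_bij (fun i _ => i.1)
      · intro i hi
        simp only [hs, Finset.mem_filter] at hi
        simp [Finset.mem_Ico, hi.2.1, hi.2.2]
      · intro i hi j hj hij
        exact Fin.val_injective hij
      · intro j hj
        simp only [Finset.mem_Ico] at hj
        exact ⟨⟨j, by omega⟩, by simp [hs, hj.1, hj.2], rfl⟩
    rw [this, Nat.card_Ico]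
    omega
  have hequiv : ∀ y : Fin m → Bool,
      (((List.ofFn y).drop d).take L = c) ↔ (∀ i ∈ s, y i = c.getD (i.1 - d) false) := by
    intro y
    constructor
    · intro he i hi
      simp only [hs, Finset.mem_filter] at hi
      obtain ⟨-, h1, h2⟩ := hi
      have hlt : i.1 - d < L := by omega
      have := congrArg (fun l => l.getD (i.1 - d) false) he
      rw [List.getD_eq_getElem _ _ (by
        simp [List.length_take, List.length_drop, List.length_ofFn]; omega)] at this
      rw [List.getD_eq_getElem _ _ (by omega)] at this
      rw [List.getElem_take, List.getElem_drop] at this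
      rw [List.getElem_ofFn] at this
      rw [List.getD_eq_getElem _ _ (show i.1 - d < c.length by omega), ← this]
      congr 1
      exact Fin.ext (by simp; omega)
    · intro hy
      apply List.ext_getElem
      · simp [List.length_take, List.length_drop, List.length_ofFn]; omega
      · intro n h1 h2
        have hn : n < L := by
          simp only [List.length_take, List.length_drop, List.length_ofFn, lt_min_iff] at h1
          exact h1.1
        rw [List.getElem_take, List.getElem_drop, List.getElem_ofFn]
        have := hy ⟨d + n, by omega⟩ (by simp [hs]; omega)
        rw [this, List.getD_eq_getElem _ _ (by simpa using hn)]
        congr 1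
        simp
  calc (Finset.univ.filter (fun y : Fin m → Bool => ((List.ofFn y).drop d).take L = c)).card
      = (Finset.univ.filter (fun y : Fin m → Bool =>
          ∀ i ∈ s, y i = c.getD (i.1 - d) false)).card := by
        congr 1
        exact Finset.filter_congr (fun y _ => hequiv y)
    _ = 2 ^ (m - L) := by rw [count_fixed m s _, hcard]

/-- number of `y` of length `m` for which `C` occurs at position `i` in `A ++ y ++ A`. -/
def cnt (m : ℕ) (A C : List Bool) (i : ℕ) : ℕ :=
  (Finset.univ.filter (fun y : Fin m → Bool =>
    C.isPrefixOf ((A ++ (List.ofFn y ++ A)).drop i))).card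

section counts

variable {k m : ℕ} {A C : List Bool}

lemma cond_iff (hC : C.length = k) (l : List Bool) :
    C.isPrefixOf l ↔ l.take k = C := by
  rw [List.isPrefixOf_iff_prefix, List.prefix_iff_eq_take, hC, eq_comm]

lemma window_zero (y : Fin m → Bool) (hA : A.length = k) :
    ((A ++ (List.ofFn y ++ A)).drop 0).take k = A := by
  rw [List.drop_zero, ← hA, List.take_left]

lemma window_end (y : Fin m → Bool) (hA : A.length = k) :
    ((A ++ (List.ofFn y ++ A)).drop (k + m)).take k = A := by
  have h : (A ++ List.ofFn y).length = k + m := by simp [hA]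
  rw [← List.append_assoc, ← h, List.drop_left, ← hA, List.take_length]

lemma window_left (y : Fin m → Bool) (hA : A.length = k) (hm : k ≤ m)
    (i : ℕ) (h1 : 1 ≤ i) (h2 : i < k) :
    ((A ++ (List.ofFn y ++ A)).drop i).take k = A.drop i ++ (List.ofFn y).take i := by
  rw [List.drop_append, hA]
  have e1 : i - k = 0 := by omega
  rw [e1, List.drop_zero, List.take_append]
  have e2 : (A.drop i).length = k - i := by simp [hA]
  rw [e2, List.take_of_length_le (by omega), List.take_append]
  have e3 : (List.ofFn y).length = m := by simp
  rw [e3]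
  have e4 : k - (k - i) - m = 0 := by omega
  have e5 : k - (k - i) = i := by omega
  rw [e4, e5, List.take_zero, List.append_nil]

lemma drop_mid (y : Fin m → Bool) (hA : A.length = k)
    (i : ℕ) (h1 : k ≤ i) (h2 : i < k + m) :
    (A ++ (List.ofFn y ++ A)).drop i = (List.ofFn y).drop (i - k) ++ A := by
  rw [List.drop_append, hA, List.drop_eq_nil_of_le (by simp [hA]; omega),
    List.nil_append, List.drop_append]
  have e3 : (List.ofFn y).length = m := by simp
  rw [e3]
  have e4 : i - k - m = 0 := by omega
  rw [e4, List.drop_zero]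

lemma window_int (y : Fin m → Bool) (hA : A.length = k)
    (i : ℕ) (h1 : k ≤ i) (h2 : i ≤ m) (hk : 1 ≤ k) :
    ((A ++ (List.ofFn y ++ A)).drop i).take k = ((List.ofFn y).drop (i - k)).take k := by
  rw [drop_mid y hA i h1 (by omega), List.take_append]
  have e1 : ((List.ofFn y).drop (i - k)).length = m - (i - k) := by simp
  rw [e1]
  have e2 : k - (m - (i - k)) = 0 := by omega
  rw [e2, List.take_zero, List.append_nil]

lemma window_right (y : Fin m → Bool) (hA : A.length = k)
    (i : ℕ) (h1 : m < i) (h2 : i < k + m) (hm : k ≤ m) :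
    ((A ++ (List.ofFn y ++ A)).drop i).take k
      = (List.ofFn y).drop (i - k) ++ A.take (i - m) := by
  rw [drop_mid y hA i (by omega) h2, List.take_append]
  have e1 : ((List.ofFn y).drop (i - k)).length = m - (i - k) := by simp
  rw [e1, List.take_of_length_le (by simp; omega)]
  congr 2
  omega

end counts

section cntlemmas

variable {k m : ℕ} {A C : List Bool}

lemma cnt_zero_self (hA : A.length = k) : cnt m A A 0 = 2 ^ m := by
  unfold cnt
  rw [Finset.filter_true_of_mem (fun y _ => ?_)]
  · simp [Finset.card_univ]
  · rw [List.drop_zero]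
    exact List.isPrefixOf_iff_prefix.2 (List.prefix_append _ _)

lemma cnt_zero_ne (hA : A.length = k) (hC : C.length = k) (hne : A ≠ C) :
    cnt m A C 0 = 0 := by
  unfold cnt
  rw [Finset.filter_false_of_mem (fun y _ => ?_), Finset.card_empty]
  intro hcond
  exact hne ((window_zero y hA) ▸ (cond_iff hC _).1 hcond)

lemma cnt_end_self (hA : A.length = k) : cnt m A A (k + m) = 2 ^ m := by
  unfold cnt
  rw [Finset.filter_true_of_mem (fun y _ => ?_)]
  · simp [Finset.card_univ]
  · exact (cond_iff hA _).2 (window_end y hA)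

lemma cnt_end_ne (hA : A.length = k) (hC : C.length = k) (hne : A ≠ C) :
    cnt m A C (k + m) = 0 := by
  unfold cnt
  rw [Finset.filter_false_of_mem (fun y _ => ?_), Finset.card_empty]
  intro hcond
  exact hne ((window_end y hA) ▸ (cond_iff hC _).1 hcond)

lemma cnt_left (hA : A.length = k) (hC : C.length = k) (hm : k ≤ m)
    (i : ℕ) (h1 : 1 ≤ i) (h2 : i < k) : cnt m A C i ≤ 2 ^ (m - i) := by
  have hlen : (C.drop (k - i)).length = i := by simp [hC]; omega
  calc cnt m A C i
      ≤ (Finset.univ.filter (fun y : Fin m → Bool =>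
          ((List.ofFn y).drop 0).take (C.drop (k - i)).length = C.drop (k - i))).card := by
        apply Finset.card_le_card
        intro y hy
        simp only [Finset.mem_filter, Finset.mem_univ, true_and] at hy ⊢
        have hw : A.drop i ++ (List.ofFn y).take i = C := by
          rw [← window_left y hA hm i h1 h2]
          exact ((cond_iff hC _).1 hy).symm ▸ rfl
        have := congrArg (List.drop (k - i)) hw
        rw [List.drop_append, List.drop_drop] at this
        have e1 : (A.drop i).length = k - i := by simp [hA]
        rw [e1, List.drop_eq_nil_of_le (le_of_eq (by simp [hA]; omega))] at this
        simp only [Nat.sub_self, List.drop_zero, List.nil_append] at this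
        rw [List.drop_zero, hlen]
        exact this
      _ = 2 ^ (m - (C.drop (k - i)).length) := count_slice m 0 _ (by omega)
      _ = 2 ^ (m - i) := by rw [hlen]

lemma cnt_int (hA : A.length = k) (hC : C.length = k) (hk : 1 ≤ k)
    (i : ℕ) (h1 : k ≤ i) (h2 : i ≤ m) : cnt m A C i = 2 ^ (m - k) := by
  unfold cnt
  have heq : ∀ y : Fin m → Bool,
      (C.isPrefixOf ((A ++ (List.ofFn y ++ A)).drop i))
        ↔ ((List.ofFn y).drop (i - k)).take C.length = C := by
    intro y
    rw [cond_iff hC, window_int y hA i h1 h2 hk, hC]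
  rw [Finset.filter_congr (fun y _ => heq y), count_slice m (i - k) C (by omega), hC]

lemma cnt_right (hA : A.length = k) (hC : C.length = k) (hm : k ≤ m)
    (i : ℕ) (h1 : m < i) (h2 : i < k + m) : cnt m A C i ≤ 2 ^ (i - k) := by
  have hlen : (C.take (m - (i - k))).length = m - (i - k) := by simp [hC]; omega
  calc cnt m A C i
      ≤ (Finset.univ.filter (fun y : Fin m → Bool =>
          ((List.ofFn y).drop (i - k)).take (C.take (m - (i - k))).length
            = C.take (m - (i - k)))).card := by
        apply Finset.card_le_card
        intro y hy
        simp only [Finset.mem_filter, Finset.mem_univ, true_and] at hy ⊢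
        have hw : (List.ofFn y).drop (i - k) ++ A.take (i - m) = C := by
          rw [← window_right y hA i h1 h2 hm]
          exact ((cond_iff hC _).1 hy).symm ▸ rfl
        have := congrArg (List.take (m - (i - k))) hw
        rw [List.take_append] at this
        have e1 : ((List.ofFn y).drop (i - k)).length = m - (i - k) := by simp
        rw [e1, List.take_of_length_le (le_of_eq e1), Nat.sub_self, List.take_zero,
          List.append_nil] at this
        rw [hlen, List.take_of_length_le (le_of_eq e1)]
        exact this
      _ = 2 ^ (m - (C.take (m - (i - k))).length) := count_slice m (i - k) _ (by omega)
      _ = 2 ^ (i - k) := by rw [hlen]; congr 1; omega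

end cntlemmas

lemma geomL (t s : ℕ) (h : t ≤ s) :
    ∑ j ∈ Finset.range t, (2:ℝ)^(s - (1+j)) = 2^s - 2^(s-t) := by
  induction t with
  | zero => simp
  | succ t ih =>
    rw [Finset.sum_range_succ, ih (by omega)]
    have h2 : s - t = (s - (t+1)) + 1 := by omega
    have h3 : s - (1 + t) = s - (t+1) := by omega
    rw [h2, h3, pow_succ]
    ring

lemma geomR (t c : ℕ) : ∑ j ∈ Finset.range t, (2:ℝ)^(c+j) = 2^(c+t) - 2^c := by
  induction t with
  | zero => simp
  | succ t ih =>
    rw [Finset.sum_range_succ, ih, ← Nat.add_assoc, pow_succ]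
    ring

lemma sum_ge (k m : ℕ) (hk : 1 ≤ k) (hm : k ≤ m) (A B : List Bool)
    (hA : A.length = k) (hB : B.length = k) (hAB : A ≠ B) :
    (2:ℝ)^(m + 2 - k) ≤ ∑ i ∈ Finset.range (k+m+1), ((cnt m A A i : ℝ) - (cnt m A B i : ℝ)) := by
  set γ : ℕ → ℝ := fun i =>
    ((if i = 0 then (2:ℝ)^m else 0) + (if i = k+m then (2:ℝ)^m else 0))
    - (if 1 ≤ i ∧ i < k then (2:ℝ)^(m-i) else 0)
    - (if m < i ∧ i < k+m then (2:ℝ)^(i-k) else 0) with hγ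
  have step1 : ∀ i ∈ Finset.range (k+m+1), γ i ≤ (cnt m A A i : ℝ) - (cnt m A B i : ℝ) := by
    intro i hi
    rw [Finset.mem_range] at hi
    rcases Nat.lt_or_ge i 1 with h0 | h1
    · -- i = 0
      interval_cases i
      rw [cnt_zero_self hA, cnt_zero_ne hA hB hAB]
      simp only [hγ, if_pos rfl, if_neg (by omega : ¬ (0:ℕ) = k+m),
        if_neg (by omega : ¬ ((1:ℕ) ≤ 0 ∧ (0:ℕ) < k)), if_neg (by omega : ¬ (m < 0 ∧ (0:ℕ) < k+m))]
      push_cast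
      simp
    rcases Nat.lt_or_ge i k with hik | hik
    · -- left boundary
      have hne0 : i ≠ 0 := by omega
      have hne : i ≠ k + m := by omega
      have hno : ¬ (m < i) := by omega
      simp only [hγ, hne0, hne, if_false, if_neg (by omega : ¬ (m < i ∧ i < k+m)),
        if_pos (⟨h1, hik⟩ : 1 ≤ i ∧ i < k)]
      have hb := cnt_left hA hB hm i h1 hik
      have ha : (0:ℝ) ≤ (cnt m A A i : ℝ) := Nat.cast_nonneg _
      have hb' : (cnt m A B i : ℝ) ≤ 2^(m-i) := by
        calc (cnt m A B i : ℝ) ≤ ((2^(m-i) : ℕ) : ℝ) := Nat.cast_le.2 hb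
          _ = 2^(m-i) := by push_cast; ring
      linarith
    rcases le_or_gt i m with him | him
    · -- interior
      have e1 := cnt_int hA hA hk i hik him
      have e2 := cnt_int hA hB hk i hik him
      rw [e1, e2]
      simp only [hγ, if_neg (by omega : ¬ i = 0), if_neg (by omega : ¬ i = k+m),
        if_neg (by omega : ¬ (1 ≤ i ∧ i < k)), if_neg (by omega : ¬ (m < i ∧ i < k+m))]
      simp
    rcases Nat.lt_or_ge i (k+m) with hikm | hikm
    · -- right boundary
      simp only [hγ, if_neg (by omega : ¬ i = 0), if_neg (by omega : ¬ i = k+m),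
        if_neg (by omega : ¬ (1 ≤ i ∧ i < k)), if_pos (⟨him, hikm⟩ : m < i ∧ i < k+m)]
      have hb := cnt_right hA hB hm i him hikm
      have ha : (0:ℝ) ≤ (cnt m A A i : ℝ) := Nat.cast_nonneg _
      have hb' : (cnt m A B i : ℝ) ≤ 2^(i-k) := by
        calc (cnt m A B i : ℝ) ≤ ((2^(i-k) : ℕ) : ℝ) := Nat.cast_le.2 hb
          _ = 2^(i-k) := by push_cast; ring
      linarith
    · -- i = k + m
      have : i = k + m := by omega
      subst this
      rw [cnt_end_self hA, cnt_end_ne hA hB hAB]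
      simp only [hγ, if_neg (by omega : ¬ k + m = 0), if_pos rfl,
        if_neg (by omega : ¬ (1 ≤ k+m ∧ k+m < k)), if_neg (by omega : ¬ (m < k+m ∧ k+m < k+m))]
      simp
  have step2 : ∑ i ∈ Finset.range (k+m+1), γ i = 2^(m+2-k) := by
    simp only [hγ]
    rw [Finset.sum_sub_distrib, Finset.sum_sub_distrib, Finset.sum_add_distrib]
    have s1 : ∑ i ∈ Finset.range (k+m+1), (if i = 0 then (2:ℝ)^m else 0) = 2^m := by
      rw [Finset.sum_ite_eq' (Finset.range (k+m+1)) 0 (fun _ => (2:ℝ)^m)]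
      simp
    have s2 : ∑ i ∈ Finset.range (k+m+1), (if i = k+m then (2:ℝ)^m else 0) = 2^m := by
      rw [Finset.sum_ite_eq' (Finset.range (k+m+1)) (k+m) (fun _ => (2:ℝ)^m)]
      simp
    have s3 : ∑ i ∈ Finset.range (k+m+1), (if 1 ≤ i ∧ i < k then (2:ℝ)^(m-i) else 0)
        = 2^m - 2^(m+1-k) := by
      rw [← Finset.sum_filter]
      have hf : (Finset.range (k+m+1)).filter (fun i => 1 ≤ i ∧ i < k) = Finset.Ico 1 k := by
        ext i; simp [Finset.mem_Ico]; omega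
      rw [hf, Finset.sum_Ico_eq_sum_range]
      have := geomL (k-1) m (by omega)
      have he : ∀ j, m - (1 + j) = m - (1 + j) := fun _ => rfl
      rw [show k - 1 = k - 1 from rfl] at this
      calc ∑ j ∈ Finset.range (k-1), (2:ℝ)^(m - (1+j)) = 2^m - 2^(m-(k-1)) := this
        _ = 2^m - 2^(m+1-k) := by congr 2; omega
    have s4 : ∑ i ∈ Finset.range (k+m+1), (if m < i ∧ i < k+m then (2:ℝ)^(i-k) else 0)
        = 2^m - 2^(m+1-k) := by
      rw [← Finset.sum_filter]
      have hf : (Finset.range (k+m+1)).filter (fun i => m < i ∧ i < k+m)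
          = Finset.Ico (m+1) (k+m) := by
        ext i; simp [Finset.mem_Ico]; omega
      rw [hf, Finset.sum_Ico_eq_sum_range]
      have he : k + m - (m+1) = k - 1 := by omega
      rw [he]
      have hcong : ∀ j ∈ Finset.range (k-1), (2:ℝ)^(m+1+j-k) = 2^((m+1-k)+j) := by
        intro j hj
        congr 1
        rw [Finset.mem_range] at hj
        omega
      calc ∑ j ∈ Finset.range (k-1), (2:ℝ)^(m+1+j-k)
          = ∑ j ∈ Finset.range (k-1), (2:ℝ)^((m+1-k)+j) := Finset.sum_congr rfl hcong
        _ = 2^((m+1-k)+(k-1)) - 2^(m+1-k) := geomR (k-1) (m+1-k)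
        _ = 2^m - 2^(m+1-k) := by congr 2; omega
    rw [s1, s2, s3, s4]
    have : m+2-k = (m+1-k)+1 := by omega
    rw [this, pow_succ]
    ring
  calc (2:ℝ)^(m+2-k) = ∑ i ∈ Finset.range (k+m+1), γ i := step2.symm
    _ ≤ _ := Finset.sum_le_sum step1

lemma flt (n : ℕ) (p : ℕ → Bool) :
    ((List.range n).filter p).length = ((Finset.range n).filter (fun i => p i)).card := by
  induction n with
  | zero => simp
  | succ n ih =>
    simp [List.range_succ, Finset.range_add_one, List.filter_append, Finset.filter_insert]
    split <;> simp_all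

lemma key (k m : ℕ) (hk : 1 ≤ k) (hm : k ≤ m) (a b : Fin k → Bool) (hab : a ≠ b) :
    ∃ x : (Fin m → Bool) → (Fin (k + m + k) → Bool), Function.Injective x ∧
      (2:ℝ)^(m + 2 - k) ≤ ∑ y : Fin m → Bool,
        ((occCount a (x y) : ℝ) - (occCount b (x y) : ℝ)) := by
  classical
  set A := List.ofFn a with hAdef
  set B := List.ofFn b with hBdef
  have hA : A.length = k := by simp [hAdef]
  have hB : B.length = k := by simp [hBdef]
  have hAB : A ≠ B := fun h => hab (List.ofFn_injective h)
  set L : (Fin m → Bool) → List Bool := fun y => A ++ (List.ofFn y ++ A) with hLdef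
  have hlen : ∀ y, (L y).length = k + m + k := by
    intro y; simp [hLdef, hA]; omega
  set x : (Fin m → Bool) → (Fin (k + m + k) → Bool) :=
    fun y i => (L y)[i.1]'(by rw [hlen]; exact i.2) with hxdef
  have hofn : ∀ y, List.ofFn (x y) = L y := by
    intro y
    apply List.ext_getElem
    · simp [hlen]
    · intro n h1 h2
      simp [hxdef]
  have hinj : Function.Injective x := by
    intro y z h
    have h2 : L y = L z := by rw [← hofn y, ← hofn z, h]
    have h3 : List.ofFn y ++ A = List.ofFn z ++ A := List.append_cancel_left h2
    exact List.ofFn_injective (List.append_cancel_right h3)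
  have hocc : ∀ (c : Fin k → Bool) y, occCount c (x y) =
      ((List.range (k + m + 1)).filter
        (fun i => (List.ofFn c).isPrefixOf ((L y).drop i))).length := by
    intro c y
    unfold occCount
    rw [hofn]
    have : k + m + k - k + 1 = k + m + 1 := by omega
    rw [this]
  refine ⟨x, hinj, ?_⟩
  have hc : ∀ (c : Fin k → Bool) y, (occCount c (x y) : ℝ)
      = ∑ i ∈ Finset.range (k + m + 1),
          (if (List.ofFn c).isPrefixOf ((L y).drop i) then (1:ℝ) else 0) := by
    intro c y
    rw [hocc, flt, Finset.card_filter]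
    push_cast
    rfl
  calc (2:ℝ)^(m + 2 - k)
      ≤ ∑ i ∈ Finset.range (k+m+1), ((cnt m A A i : ℝ) - (cnt m A B i : ℝ)) :=
        sum_ge k m hk hm A B hA hB hAB
    _ = ∑ y : Fin m → Bool, ((occCount a (x y) : ℝ) - (occCount b (x y) : ℝ)) := by
        have hcnt : ∀ (C : List Bool) (i : ℕ), ((cnt m A C i : ℝ))
            = ∑ y : Fin m → Bool, (if C.isPrefixOf ((L y).drop i) then (1:ℝ) else 0) := by
          intro C i
          rw [Finset.sum_boole]
          norm_num [cnt, hLdef]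
        simp only [hcnt, hc, ← Finset.sum_sub_distrib]
        rw [Finset.sum_comm]

theorem stmt18 (k : ℕ) (hk : 1 ≤ k) (a b : Fin k → Bool) (hab : a ≠ b)
    (δ : ℝ) (hδ0 : 0 ≤ δ) (hδ1 : δ < 1)
    (M : ℕ → ℕ)
    (Φ : (N : ℕ) → EuclideanSpace ℝ (Fin N → Bool) →ₗ[ℝ] EuclideanSpace ℝ (Fin (M N)))
    (hRIP : ∀ N, k ≤ N →
      (1 - δ) * ‖transformVec k N a - transformVec k N b‖ ≤
        ‖Φ N (transformVec k N a - transformVec k N b)‖)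
    (D : ℝ) (hD : 0 ≤ D) :
    ∃ N : ℕ, k ≤ N ∧ D ≤ ‖Φ N (transformVec k N a) - Φ N (transformVec k N b)‖ := by
  classical
  have h1δ : 0 < 1 - δ := by linarith
  obtain ⟨t, ht⟩ := pow_unbounded_of_one_lt ((D / (1 - δ))^2) (one_lt_two (α := ℝ))
  set m := 2*k + t with hmdef
  set N := k + m + k with hNdef
  obtain ⟨x, hxinj, hsum⟩ := key k m hk (by omega) a b hab
  refine ⟨N, by omega, ?_⟩
  set v := transformVec k N a - transformVec k N b with hvdef
  have hvx : ∀ z : Fin N → Bool, v z = (occCount a z : ℝ) - (occCount b z : ℝ) := by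
    intro z
    simp [hvdef, transformVec, PiLp.sub_apply]
  -- Cauchy-Schwarz over the injected family
  set S : ℝ := ∑ y : Fin m → Bool, ((occCount a (x y) : ℝ) - (occCount b (x y) : ℝ)) with hSdef
  have hS0 : 0 ≤ S := le_trans (by positivity) hsum
  have hCS : S^2 ≤ (2:ℝ)^m * ∑ y : Fin m → Bool, (v (x y))^2 := by
    have := Finset.sum_mul_sq_le_sq_mul_sq Finset.univ (fun _ => (1:ℝ))
      (fun y : Fin m → Bool => v (x y))
    have hone : ∑ _y : Fin m → Bool, ((1:ℝ))^2 = (2:ℝ)^m := by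
      simp [Finset.card_univ]
    calc S^2 = (∑ y : Fin m → Bool, (1:ℝ) * v (x y))^2 := by
          congr 1
          rw [hSdef]
          exact Finset.sum_congr rfl (fun y _ => by rw [one_mul, hvx])
      _ ≤ (∑ _y : Fin m → Bool, ((1:ℝ))^2) * ∑ y : Fin m → Bool, (v (x y))^2 := this
      _ = (2:ℝ)^m * ∑ y : Fin m → Bool, (v (x y))^2 := by rw [hone]
  have himg : ∑ y : Fin m → Bool, (v (x y))^2 ≤ ∑ z : Fin N → Bool, (v z)^2 := by
    rw [← Finset.sum_image (f := fun z => (v z)^2) (g := x)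
      (fun y _ z _ h => hxinj h)]
    exact Finset.sum_le_sum_of_subset_of_nonneg (Finset.subset_univ _)
      (fun _ _ _ => sq_nonneg _)
  have hnorm : ∑ z : Fin N → Bool, (v z)^2 = ‖v‖^2 := by
    rw [EuclideanSpace.norm_eq, Real.sq_sqrt (by positivity)]
    exact Finset.sum_congr rfl (fun z _ => by rw [Real.norm_eq_abs, sq_abs])
  -- pow arithmetic
  have hpow1 : (2:ℝ)^m * (2:ℝ)^(t+4) = ((2:ℝ)^(m+2-k))^2 := by
    rw [← pow_mul, ← pow_add]
    congr 1
    omega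
  have hlb : (2:ℝ)^m * (2:ℝ)^(t+4) ≤ (2:ℝ)^m * ‖v‖^2 := by
    rw [hpow1]
    calc ((2:ℝ)^(m+2-k))^2 ≤ S^2 := by
          apply pow_le_pow_left₀ (by positivity) hsum
      _ ≤ (2:ℝ)^m * ∑ y : Fin m → Bool, (v (x y))^2 := hCS
      _ ≤ (2:ℝ)^m * ‖v‖^2 := by
          apply mul_le_mul_of_nonneg_left _ (by positivity)
          rw [← hnorm]
          exact himg
  have hv2 : (2:ℝ)^(t+4) ≤ ‖v‖^2 := le_of_mul_le_mul_left (by rwa [] at hlb) (by positivity)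
  have hDv : (D / (1 - δ))^2 < ‖v‖^2 := by
    calc (D / (1 - δ))^2 < (2:ℝ)^t := ht
      _ ≤ (2:ℝ)^(t+4) := by
          apply pow_le_pow_right₀ (by norm_num)
          omega
      _ ≤ ‖v‖^2 := hv2
  have hDle : D / (1 - δ) ≤ ‖v‖ := by
    nlinarith [norm_nonneg v, div_nonneg hD (le_of_lt h1δ)]
  have hfinal : D ≤ (1 - δ) * ‖v‖ := by
    rw [div_le_iff₀ h1δ] at hDle
    linarith [hDle]
  calc D ≤ (1 - δ) * ‖v‖ := hfinal
    _ ≤ ‖Φ N v‖ := hRIP N (by omega)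
    _ = ‖Φ N (transformVec k N a) - Φ N (transformVec k N b)‖ := by
        rw [hvdef, map_sub]
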